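/- Under the modified DQM condition, n^{-1/2} Σ_{i=1}^n R_i · v_ξ(X_i)/f₀(X_i) = o_P(1) and, componentwise, n^{-1/2} Σ_{i=1}^n R_i · v_θ(X_i)/f₀(X_i) = o_P(1) under the null product law P_{n,ξ₀,θ}. -/

import Mathlib

open MeasureTheory Filter Topology Asymptotics ProbabilityTheory
open scoped BigOperators ENNReal NNReal

lemma pi_eval_lintegral {𝒳 : Type*} [MeasurableSpace 𝒳] (ν : Measure 𝒳)
    [IsProbabilityMeasure ν] {n : ℕ} (i : Fin n) {F : 𝒳 → ℝ≥0∞} (hF : Measurable F) :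
    ∫⁻ ω, F (ω i) ∂(Measure.pi fun _ : Fin n => ν) = ∫⁻ x, F x ∂ν := by
  rw [← lintegral_map hF (measurable_pi_apply i)]
  congr 1
  ext s hs
  rw [Measure.map_apply (measurable_pi_apply i) hs]
  have hset : (fun ω : Fin n → 𝒳 => ω i) ⁻¹' s
      = Set.pi Set.univ (Function.update (fun _ : Fin n => Set.univ) i s) := by
    ext ω
    simp only [Set.mem_preimage, Set.mem_univ_pi, Function.update_apply]
    constructor
    · intro h j
      by_cases hj : j = i
      · subst hj; simpa using h
      · simp [hj]
    · intro h
      simpa using h i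
  rw [hset, Measure.pi_pi]
  rw [Finset.prod_eq_single i (fun j _ hj => by simp [Function.update_of_ne hj])
    (fun h => absurd (Finset.mem_univ i) h)]
  simp

lemma crossterm_helper {𝒳 : Type*} [MeasurableSpace 𝒳] (μ : Measure 𝒳)
    (p₀ : 𝒳 → ℝ) (hp₀meas : Measurable p₀) (hp₀nn : ∀ x, 0 ≤ p₀ x)
    (hp₀int : ∫ x, p₀ x ∂μ = 1)
    (w : 𝒳 → ℝ) (hwmeas : Measurable w) (hw : MemLp w 2 μ)
    (r : ℕ → 𝒳 → ℝ) (hrmeas : ∀ n, Measurable (r n)) (hrL2 : ∀ n, MemLp (r n) 2 μ)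
    (hlim : Tendsto (fun n : ℕ => (n : ℝ) * ∫ x, (r n x) ^ 2 ∂μ) atTop (𝓝 0))
    (ε : ℝ) (hε : 0 < ε) :
    Tendsto (fun n : ℕ =>
      (Measure.pi fun _ : Fin n => μ.withDensity fun x => ENNReal.ofReal (p₀ x))
        {ω | ε < |(Real.sqrt n)⁻¹ * ∑ i,
          (r n (ω i) / Real.sqrt (p₀ (ω i))) * (w (ω i) / Real.sqrt (p₀ (ω i)))|})
      atTop (𝓝 0) := by
  set ν : Measure 𝒳 := μ.withDensity fun x => ENNReal.ofReal (p₀ x) with hν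
  have hp₀Int : Integrable p₀ μ := integrable_of_integral_eq_one hp₀int
  have hdmeas : Measurable fun x => ENNReal.ofReal (p₀ x) := hp₀meas.ennreal_ofReal
  have hνprob : IsProbabilityMeasure ν := by
    constructor
    rw [hν, withDensity_apply _ MeasurableSet.univ, Measure.restrict_univ,
      ← ofReal_integral_eq_lintegral_ofReal hp₀Int (Filter.Eventually.of_forall hp₀nn),
      hp₀int, ENNReal.ofReal_one]
  have hsqrt : Measurable fun x => Real.sqrt (p₀ x) :=
    Real.continuous_sqrt.measurable.comp hp₀meas
  set g : ℕ → 𝒳 → ℝ :=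
    fun n x => (r n x / Real.sqrt (p₀ x)) * (w x / Real.sqrt (p₀ x)) with hgdef
  have hgmeas : ∀ n, Measurable (g n) :=
    fun n => ((hrmeas n).div hsqrt).mul (hwmeas.div hsqrt)
  set I : ℕ → ℝ := fun n => ∫ x, (r n x) ^ 2 ∂μ with hI
  have hInn : ∀ n, 0 ≤ I n := fun n => integral_nonneg fun x => sq_nonneg _
  set K : ℝ := Real.sqrt (∫ x, (w x) ^ 2 ∂μ) with hK
  have hKnn : 0 ≤ K := Real.sqrt_nonneg _
  -- Hölder step
  have hrsq : ∀ n, Integrable (fun x => (r n x) ^ 2) μ :=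
    fun n => (memLp_two_iff_integrable_sq (hrL2 n).aestronglyMeasurable).mp (hrL2 n)
  have hwsq : Integrable (fun x => (w x) ^ 2) μ :=
    (memLp_two_iff_integrable_sq hw.aestronglyMeasurable).mp hw
  have habs2 : ∀ (f : 𝒳 → ℝ), (∀ x, (ENNReal.ofReal |f x|) ^ (2:ℝ) = ENNReal.ofReal ((f x) ^ 2)) := by
    intro f x
    rw [ENNReal.ofReal_rpow_of_nonneg (abs_nonneg _) (by norm_num),
      show ((2:ℝ)) = ((2:ℕ):ℝ) by norm_num, Real.rpow_natCast, sq_abs]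
  have hofhalf : ∀ (a : ℝ), 0 ≤ a → (ENNReal.ofReal a) ^ ((1:ℝ)/2) = ENNReal.ofReal (Real.sqrt a) := by
    intro a ha
    rw [ENNReal.ofReal_rpow_of_nonneg ha (by norm_num), Real.sqrt_eq_rpow]
  have hHold : ∀ n, (∫⁻ x, ENNReal.ofReal |r n x| * ENNReal.ofReal |w x| ∂μ)
      ≤ ENNReal.ofReal (Real.sqrt (I n)) * ENNReal.ofReal K := by
    intro n
    have h22 : (2:ℝ).HolderConjugate 2 := Real.HolderConjugate.two_two
    have := ENNReal.lintegral_mul_le_Lp_mul_Lq μ h22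
      ((hrmeas n).abs.ennreal_ofReal.aemeasurable) (hwmeas.abs.ennreal_ofReal.aemeasurable)
    simp only [Pi.mul_apply] at this
    refine this.trans (le_of_eq ?_)
    have h1 : (∫⁻ x, (ENNReal.ofReal |r n x|) ^ (2:ℝ) ∂μ) = ENNReal.ofReal (I n) := by
      simp only [habs2]
      rw [← ofReal_integral_eq_lintegral_ofReal (hrsq n) (Filter.Eventually.of_forall fun x => sq_nonneg _)]
    have h2 : (∫⁻ x, (ENNReal.ofReal |w x|) ^ (2:ℝ) ∂μ) = ENNReal.ofReal (∫ x, (w x) ^ 2 ∂μ) := by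
      simp only [habs2]
      rw [← ofReal_integral_eq_lintegral_ofReal hwsq (Filter.Eventually.of_forall fun x => sq_nonneg _)]
    rw [h1, h2, hofhalf _ (hInn n), hofhalf _ (integral_nonneg fun x => sq_nonneg _)]
  -- key per-coordinate bound
  have hkey : ∀ n, (∫⁻ x, ENNReal.ofReal |g n x| ∂ν)
      ≤ ENNReal.ofReal (Real.sqrt (I n) * K) := by
    intro n
    rw [hν, lintegral_withDensity_eq_lintegral_mul μ hdmeas ((hgmeas n).abs.ennreal_ofReal)]
    have hpt : ∀ x, (fun a => ENNReal.ofReal (p₀ a)) x * (fun a => ENNReal.ofReal |g n a|) x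
        ≤ ENNReal.ofReal |r n x| * ENNReal.ofReal |w x| := by
      intro x
      rcases eq_or_lt_of_le (hp₀nn x) with h0 | hpos
      · have hz : Real.sqrt (p₀ x) = 0 := by rw [← h0, Real.sqrt_zero]
        simp [hgdef, hz]
      · have hs : Real.sqrt (p₀ x) * Real.sqrt (p₀ x) = p₀ x := Real.mul_self_sqrt (hp₀nn x)
        have hgx : g n x = (r n x * w x) / p₀ x := by
          rw [hgdef]; dsimp only; rw [div_mul_div_comm, hs]
        have habs : |g n x| = |r n x * w x| / p₀ x := by
          rw [hgx, abs_div, abs_of_pos hpos]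
        refine le_of_eq ?_
        dsimp only
        rw [habs, ← ENNReal.ofReal_mul (le_of_lt hpos),
          mul_div_cancel₀ _ (ne_of_gt hpos), abs_mul, ENNReal.ofReal_mul (abs_nonneg _)]
    calc (∫⁻ x, ((fun a => ENNReal.ofReal (p₀ a)) * fun a => ENNReal.ofReal |g n a|) x ∂μ)
        ≤ ∫⁻ x, ENNReal.ofReal |r n x| * ENNReal.ofReal |w x| ∂μ := lintegral_mono hpt
      _ ≤ ENNReal.ofReal (Real.sqrt (I n)) * ENNReal.ofReal K := hHold n
      _ = ENNReal.ofReal (Real.sqrt (I n) * K) :=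
          (ENNReal.ofReal_mul (Real.sqrt_nonneg _)).symm
  -- Markov + sum bound
  have hbound : ∀ n : ℕ,
      (Measure.pi fun _ : Fin n => ν) {ω | ε < |(Real.sqrt n)⁻¹ * ∑ i, g n (ω i)|}
        ≤ ENNReal.ofReal ((Real.sqrt n)⁻¹ * ((n : ℝ) * (Real.sqrt (I n) * K)))
          / ENNReal.ofReal ε := by
    intro n
    set π : Measure (Fin n → 𝒳) := Measure.pi fun _ : Fin n => ν with hπ
    have hSummeas : Measurable fun ω : Fin n → 𝒳 => ∑ i, g n (ω i) :=
      Finset.measurable_sum _ fun i _ => (hgmeas n).comp (measurable_pi_apply i)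
    have hSmeas : Measurable fun ω : Fin n → 𝒳 =>
        ENNReal.ofReal |(Real.sqrt n)⁻¹ * ∑ i, g n (ω i)| :=
      ((measurable_const.mul hSummeas).abs).ennreal_ofReal
    have hsub : {ω : Fin n → 𝒳 | ε < |(Real.sqrt n)⁻¹ * ∑ i, g n (ω i)|}
        ⊆ {ω | ENNReal.ofReal ε ≤ ENNReal.ofReal |(Real.sqrt n)⁻¹ * ∑ i, g n (ω i)|} :=
      fun ω hω => ENNReal.ofReal_le_ofReal (le_of_lt hω)
    have hmarkov := meas_ge_le_lintegral_div hSmeas.aemeasurable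
      (ne_of_gt (ENNReal.ofReal_pos.mpr hε)) ENNReal.ofReal_ne_top (μ := π)
    have hlint : (∫⁻ ω, ENNReal.ofReal |(Real.sqrt n)⁻¹ * ∑ i, g n (ω i)| ∂π)
        ≤ ENNReal.ofReal ((Real.sqrt n)⁻¹ * ((n : ℝ) * (Real.sqrt (I n) * K))) := by
      have hinvnn : (0:ℝ) ≤ (Real.sqrt n)⁻¹ := inv_nonneg.mpr (Real.sqrt_nonneg _)
      calc (∫⁻ ω, ENNReal.ofReal |(Real.sqrt n)⁻¹ * ∑ i, g n (ω i)| ∂π)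
          ≤ ∫⁻ ω, ENNReal.ofReal ((Real.sqrt n)⁻¹) * ∑ i, ENNReal.ofReal |g n (ω i)| ∂π := by
            refine lintegral_mono fun ω => ?_
            rw [← ENNReal.ofReal_sum_of_nonneg (fun i _ => abs_nonneg _),
              ← ENNReal.ofReal_mul hinvnn]
            refine ENNReal.ofReal_le_ofReal ?_
            rw [abs_mul, abs_of_nonneg hinvnn]
            exact mul_le_mul_of_nonneg_left (Finset.abs_sum_le_sum_abs _ _) hinvnn
        _ = ENNReal.ofReal ((Real.sqrt n)⁻¹) * ∑ i, ∫⁻ ω, ENNReal.ofReal |g n (ω i)| ∂π := by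
            have hgi : ∀ i : Fin n, Measurable fun ω : Fin n → 𝒳 => ENNReal.ofReal |g n (ω i)| :=
              fun i => (((hgmeas n).comp (measurable_pi_apply i)).abs).ennreal_ofReal
            rw [lintegral_const_mul _ (Finset.measurable_sum _ fun i _ => hgi i)]
            rw [lintegral_finset_sum _ fun i _ => hgi i]
        _ = ENNReal.ofReal ((Real.sqrt n)⁻¹) * ∑ _i : Fin n, ∫⁻ x, ENNReal.ofReal |g n x| ∂ν := by
            congr 1
            exact Finset.sum_congr rfl fun i _ =>
              pi_eval_lintegral ν i ((hgmeas n).abs.ennreal_ofReal)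
        _ = ENNReal.ofReal ((Real.sqrt n)⁻¹) * ((n : ℝ≥0∞) * ∫⁻ x, ENNReal.ofReal |g n x| ∂ν) := by
            rw [Finset.sum_const, Finset.card_univ, Fintype.card_fin, nsmul_eq_mul]
        _ ≤ ENNReal.ofReal ((Real.sqrt n)⁻¹) * ((n : ℝ≥0∞) * ENNReal.ofReal (Real.sqrt (I n) * K)) :=
            mul_le_mul_right (mul_le_mul_right (hkey n) _) _
        _ = ENNReal.ofReal ((Real.sqrt n)⁻¹ * ((n : ℝ) * (Real.sqrt (I n) * K))) := by
            rw [ENNReal.ofReal_mul hinvnn, ENNReal.ofReal_mul (Nat.cast_nonneg n),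
              ENNReal.ofReal_natCast]
    calc π {ω | ε < |(Real.sqrt n)⁻¹ * ∑ i, g n (ω i)|}
        ≤ π {ω | ENNReal.ofReal ε ≤ ENNReal.ofReal |(Real.sqrt n)⁻¹ * ∑ i, g n (ω i)|} :=
          measure_mono hsub
      _ ≤ (∫⁻ ω, ENNReal.ofReal |(Real.sqrt n)⁻¹ * ∑ i, g n (ω i)| ∂π) / ENNReal.ofReal ε :=
          hmarkov
      _ ≤ ENNReal.ofReal ((Real.sqrt n)⁻¹ * ((n : ℝ) * (Real.sqrt (I n) * K)))
            / ENNReal.ofReal ε := ENNReal.div_le_div_right hlint _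
  -- squeeze
  have hx : Tendsto (fun n : ℕ => Real.sqrt ((n : ℝ) * I n) * K / ε) atTop (𝓝 0) := by
    have h1 : Tendsto (fun n : ℕ => Real.sqrt ((n : ℝ) * I n)) atTop (𝓝 (Real.sqrt 0)) :=
      (Real.continuous_sqrt.tendsto 0).comp hlim
    rw [Real.sqrt_zero] at h1
    have h2 := (h1.mul_const K).div_const ε
    simpa using h2
  have hb : Tendsto (fun n : ℕ => ENNReal.ofReal (Real.sqrt ((n : ℝ) * I n) * K / ε))
      atTop (𝓝 0) := by
    simpa using ENNReal.tendsto_ofReal hx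
  refine tendsto_of_tendsto_of_tendsto_of_le_of_le' tendsto_const_nhds hb
    (Filter.Eventually.of_forall fun n => zero_le) ?_
  filter_upwards [eventually_ge_atTop 1] with n hn
  have hnpos : (0:ℝ) < n := by exact_mod_cast hn
  have hne : Real.sqrt n ≠ 0 := ne_of_gt (Real.sqrt_pos.mpr hnpos)
  have heq : (Real.sqrt n)⁻¹ * ((n : ℝ) * (Real.sqrt (I n) * K))
      = Real.sqrt ((n : ℝ) * I n) * K := by
    have h1 : (Real.sqrt n)⁻¹ * (n : ℝ) = Real.sqrt n := by
      rw [inv_mul_eq_div, eq_comm, eq_div_iff hne, Real.mul_self_sqrt (Nat.cast_nonneg n)]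
    rw [Real.sqrt_mul (Nat.cast_nonneg n), ← mul_assoc, ← mul_assoc, h1, mul_assoc]
  refine (hbound n).trans (le_of_eq ?_)
  rw [heq, ENNReal.ofReal_div_of_pos hε]

/-- Under the modified DQM condition,
`n^{-1/2} ∑ᵢ Rᵢ · v_ξ(Xᵢ)/f₀(Xᵢ) = o_P(1)` and componentwise
`n^{-1/2} ∑ᵢ Rᵢ · v_θ(Xᵢ)/f₀(Xᵢ) = o_P(1)` under the null product law. -/
theorem cross_terms_remainder_tendsto_zero
    {𝒳 : Type*} [MeasurableSpace 𝒳] (μ : Measure 𝒳) [SigmaFinite μ]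
    {P : ℕ} (p : ℝ → (Fin P → ℝ) → 𝒳 → ℝ)
    (ξ₀ : ℝ) (θ : Fin P → ℝ)
    (hmeas : ∀ ξ' θ', Measurable (p ξ' θ'))
    (hnonneg : ∀ ξ' θ' x, 0 ≤ p ξ' θ' x)
    (hprob : ∀ ξ' θ', ∫ x, p ξ' θ' x ∂μ = 1)
    (vξ : 𝒳 → ℝ) (vθ : 𝒳 → Fin P → ℝ)
    (hvξmeas : Measurable vξ) (hvθmeas : ∀ j, Measurable fun x => vθ x j)
    (hvξ : MemLp vξ 2 μ) (hvθ : ∀ j, MemLp (fun x => vθ x j) 2 μ)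
    (hDQM : (fun q : ℝ × (Fin P → ℝ) =>
        ∫ x, (Real.sqrt (p q.1 q.2 x) - Real.sqrt (p ξ₀ θ x)
          - ((q.1 - ξ₀) ^ 2 * vξ x + ∑ j, (q.2 j - θ j) * vθ x j)) ^ 2 ∂μ)
        =o[𝓝 (ξ₀, θ)]
        (fun q : ℝ × (Fin P → ℝ) => (q.1 - ξ₀) ^ 4 + ∑ j, (q.2 j - θ j) ^ 2))
    (δ₁ : ℝ) (δ₂ : Fin P → ℝ)
    (ξn : ℕ → ℝ) (hξn : ∀ n, ξn n = ξ₀ + δ₁ * (n : ℝ) ^ (-(1 / 4 : ℝ)))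
    (θn : ℕ → Fin P → ℝ)
    (hθn : ∀ n j, θn n j = θ j + δ₂ j * (n : ℝ) ^ (-(1 / 2 : ℝ)))
    (r : ℕ → 𝒳 → ℝ)
    (hr : ∀ n x, r n x = Real.sqrt (p (ξn n) (θn n) x) - Real.sqrt (p ξ₀ θ x)
          - ((ξn n - ξ₀) ^ 2 * vξ x + ∑ j, (θn n j - θ j) * vθ x j))
    :
    ∀ ε > (0 : ℝ),
      (Tendsto (fun n : ℕ =>
        (Measure.pi fun _ : Fin n => μ.withDensity fun x => ENNReal.ofReal (p ξ₀ θ x))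
          {ω | ε < |(Real.sqrt n)⁻¹ * ∑ i,
            (r n (ω i) / Real.sqrt (p ξ₀ θ (ω i))) * (vξ (ω i) / Real.sqrt (p ξ₀ θ (ω i)))|})
        atTop (𝓝 0)) ∧
      (∀ j : Fin P, Tendsto (fun n : ℕ =>
        (Measure.pi fun _ : Fin n => μ.withDensity fun x => ENNReal.ofReal (p ξ₀ θ x))
          {ω | ε < |(Real.sqrt n)⁻¹ * ∑ i,
            (r n (ω i) / Real.sqrt (p ξ₀ θ (ω i))) * (vθ (ω i) j / Real.sqrt (p ξ₀ θ (ω i)))|})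
        atTop (𝓝 0)) := by
  intro ε hε
  -- measurability and integrability of the ingredients
  have hsqrtmeas : ∀ ξ' θ', Measurable fun x => Real.sqrt (p ξ' θ' x) :=
    fun ξ' θ' => Real.continuous_sqrt.measurable.comp (hmeas ξ' θ')
  have hrmeas : ∀ n, Measurable (r n) := by
    intro n
    have : r n = fun x => Real.sqrt (p (ξn n) (θn n) x) - Real.sqrt (p ξ₀ θ x)
        - ((ξn n - ξ₀) ^ 2 * vξ x + ∑ j, (θn n j - θ j) * vθ x j) := funext (hr n)
    rw [this]
    exact ((hsqrtmeas _ _).sub (hsqrtmeas _ _)).sub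
      ((hvξmeas.const_mul _).add (Finset.measurable_sum _ fun j _ => (hvθmeas j).const_mul _))
  have hsqrtL2 : ∀ ξ' θ', MemLp (fun x => Real.sqrt (p ξ' θ' x)) 2 μ := by
    intro ξ' θ'
    refine (memLp_two_iff_integrable_sq (hsqrtmeas ξ' θ').aestronglyMeasurable).mpr ?_
    have : (fun x => Real.sqrt (p ξ' θ' x) ^ 2) = p ξ' θ' :=
      funext fun x => Real.sq_sqrt (hnonneg _ _ x)
    rw [this]
    exact integrable_of_integral_eq_one (hprob ξ' θ')
  have hrL2 : ∀ n, MemLp (r n) 2 μ := by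
    intro n
    have heq : r n = fun x => Real.sqrt (p (ξn n) (θn n) x) - Real.sqrt (p ξ₀ θ x)
        - ((ξn n - ξ₀) ^ 2 * vξ x + ∑ j, (θn n j - θ j) * vθ x j) := funext (hr n)
    rw [heq]
    exact ((hsqrtL2 _ _).sub (hsqrtL2 _ _)).sub
      ((hvξ.const_mul _).add
        (memLp_finset_sum Finset.univ fun j _ => (hvθ j).const_mul _))
  -- the key limit `n · ∫ rₙ² → 0`
  have hlim : Tendsto (fun n : ℕ => (n : ℝ) * ∫ x, (r n x) ^ 2 ∂μ) atTop (𝓝 0) := by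
    set C : ℝ := δ₁ ^ 4 + ∑ j, δ₂ j ^ 2 with hC
    have h4 : Tendsto (fun n : ℕ => ((n : ℝ)) ^ (-(1 / 4 : ℝ))) atTop (𝓝 0) :=
      (tendsto_rpow_neg_atTop (by norm_num)).comp tendsto_natCast_atTop_atTop
    have h2 : Tendsto (fun n : ℕ => ((n : ℝ)) ^ (-(1 / 2 : ℝ))) atTop (𝓝 0) :=
      (tendsto_rpow_neg_atTop (by norm_num)).comp tendsto_natCast_atTop_atTop
    have hseq : Tendsto (fun n : ℕ => (ξn n, θn n)) atTop (𝓝 (ξ₀, θ)) := by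
      refine Tendsto.prodMk_nhds ?_ ?_
      · have : Tendsto (fun n : ℕ => ξ₀ + δ₁ * ((n : ℝ)) ^ (-(1 / 4 : ℝ))) atTop
            (𝓝 (ξ₀ + δ₁ * 0)) := tendsto_const_nhds.add (h4.const_mul δ₁)
        simp only [mul_zero, add_zero] at this
        exact (funext hξn : ξn = _) ▸ this
      · rw [tendsto_pi_nhds]
        intro j
        have : Tendsto (fun n : ℕ => θ j + δ₂ j * ((n : ℝ)) ^ (-(1 / 2 : ℝ))) atTop
            (𝓝 (θ j + δ₂ j * 0)) := tendsto_const_nhds.add (h2.const_mul (δ₂ j))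
        simp only [mul_zero, add_zero] at this
        refine this.congr fun n => (hθn n j).symm
    have ho := hDQM.comp_tendsto hseq
    have hF : (fun n : ℕ => (fun q : ℝ × (Fin P → ℝ) =>
          ∫ x, (Real.sqrt (p q.1 q.2 x) - Real.sqrt (p ξ₀ θ x)
            - ((q.1 - ξ₀) ^ 2 * vξ x + ∑ j, (q.2 j - θ j) * vθ x j)) ^ 2 ∂μ)
          ((fun n : ℕ => (ξn n, θn n)) n))
        =ᶠ[atTop] fun n : ℕ => ∫ x, (r n x) ^ 2 ∂μ := by
      refine Filter.Eventually.of_forall fun n => ?_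
      simp only []
      congr 1
      funext x
      rw [hr n x]
    have hGn : ∀ n : ℕ, (ξn n - ξ₀) ^ 4 + ∑ j, (θn n j - θ j) ^ 2 = C * ((n : ℝ))⁻¹ := by
      intro n
      have h1 : ξn n - ξ₀ = δ₁ * (n : ℝ) ^ (-(1 / 4 : ℝ)) := by rw [hξn]; ring
      have h2' : ∀ j, θn n j - θ j = δ₂ j * (n : ℝ) ^ (-(1 / 2 : ℝ)) := fun j => by
        rw [hθn]; ring
      have ht4 : ((n : ℝ) ^ (-(1 / 4 : ℝ))) ^ (4 : ℕ) = ((n : ℝ))⁻¹ := by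
        rw [← Real.rpow_natCast ((n : ℝ) ^ (-(1 / 4 : ℝ))) 4,
          ← Real.rpow_mul (Nat.cast_nonneg n),
          show (-(1 / 4 : ℝ)) * ((4 : ℕ) : ℝ) = -1 by norm_num, Real.rpow_neg_one]
      have ht2 : ((n : ℝ) ^ (-(1 / 2 : ℝ))) ^ (2 : ℕ) = ((n : ℝ))⁻¹ := by
        rw [← Real.rpow_natCast ((n : ℝ) ^ (-(1 / 2 : ℝ))) 2,
          ← Real.rpow_mul (Nat.cast_nonneg n),
          show (-(1 / 2 : ℝ)) * ((2 : ℕ) : ℝ) = -1 by norm_num, Real.rpow_neg_one]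
      simp only [h1, h2', mul_pow, ht4, ht2, hC]
      rw [← Finset.sum_mul, ← add_mul]
    have hG : (fun n : ℕ => (fun q : ℝ × (Fin P → ℝ) =>
          (q.1 - ξ₀) ^ 4 + ∑ j, (q.2 j - θ j) ^ 2) ((fun n : ℕ => (ξn n, θn n)) n))
        =ᶠ[atTop] fun n : ℕ => C * ((n : ℝ))⁻¹ :=
      Filter.Eventually.of_forall fun n => hGn n
    have ho2 : (fun n : ℕ => ∫ x, (r n x) ^ 2 ∂μ) =o[atTop] fun n : ℕ => C * ((n : ℝ))⁻¹ :=
      ho.congr' hF hG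
    have ho3 : (fun n : ℕ => (n : ℝ) * ∫ x, (r n x) ^ 2 ∂μ)
        =o[atTop] fun n : ℕ => (n : ℝ) * (C * ((n : ℝ))⁻¹) :=
      (isBigO_refl (fun n : ℕ => (n : ℝ)) atTop).mul_isLittleO ho2
    have ho4 : (fun n : ℕ => (n : ℝ) * ∫ x, (r n x) ^ 2 ∂μ) =o[atTop] fun _ : ℕ => (1 : ℝ) := by
      refine (ho3.congr' Filter.EventuallyEq.rfl ?_).trans_isBigO
        (isBigO_const_const C one_ne_zero _)
      filter_upwards [eventually_ge_atTop 1] with n hn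
      have hne : (n : ℝ) ≠ 0 := by positivity
      field_simp
    exact (isLittleO_one_iff ℝ).mp ho4
  constructor
  · exact crossterm_helper μ (p ξ₀ θ) (hmeas ξ₀ θ) (hnonneg ξ₀ θ) (hprob ξ₀ θ)
      vξ hvξmeas hvξ r hrmeas hrL2 hlim ε hε
  · intro j
    exact crossterm_helper μ (p ξ₀ θ) (hmeas ξ₀ θ) (hnonneg ξ₀ θ) (hprob ξ₀ θ)
      (fun x => vθ x j) (hvθmeas j) (hvθ j) r hrmeas hrL2 hlim ε hε
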